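/- For every $d \geq 1$ there exist self-adjoint matrices $B_1,\dots,B_d \in M_{2^{d-1}}(\mathbb{C})$ such that (i) for every unit vector $v \in \mathbb{R}^d$, $\sum_{i=1}^d v_i B_i \leq I$, and (ii) $d$ is an eigenvalue of $\sum_{i=1}^d B_i \otimes B_i$. Consequently, if $\sum_{i=1}^d B_i \otimes B_i \leq \rho I$, then $\rho \geq d$. -/

import Mathlib

open Matrix
open scoped Kronecker ComplexOrder

namespace Stmt3

variable {n : ℕ}

def eps (s : Fin n → Bool) (k : Fin n) : ℂ := if s k then -1 else 1

def sgn (s : Fin n → Bool) (j : ℕ) : ℂ :=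
  ∏ k ∈ Finset.univ.filter (fun k : Fin n => (k : ℕ) < j), eps s k

def flip (s : Fin n → Bool) (q : Fin n) : Fin n → Bool := Function.update s q (!(s q))

lemma flip_apply (s : Fin n → Bool) (q r : Fin n) :
    flip s q r = if r = q then !(s r) else s r := by
  by_cases h : r = q
  · subst h; simp [flip]
  · simp [flip, Function.update_of_ne h, h]

lemma flip_apply_ne (s : Fin n → Bool) {p q : Fin n} (h : p ≠ q) : flip s q p = s p := by
  simp [flip_apply, h]

lemma flip_flip (s : Fin n → Bool) (q : Fin n) : flip (flip s q) q = s := by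
  funext r; simp only [flip_apply]; split_ifs with h <;> simp

lemma flip_ne (s : Fin n → Bool) (q : Fin n) : flip s q ≠ s := by
  intro h
  have := congrFun h q
  simp [flip_apply] at this

lemma flip_comm (s : Fin n → Bool) {p q : Fin n} (h : p ≠ q) :
    flip (flip s p) q = flip (flip s q) p := by
  funext r
  simp only [flip_apply]
  split_ifs with h1 h2 h2 <;> simp_all

lemma eps_mul_self (s : Fin n → Bool) (k : Fin n) : eps s k * eps s k = 1 := by
  unfold eps; split <;> ring

lemma star_eps (s : Fin n → Bool) (k : Fin n) : star (eps s k) = eps s k := by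
  unfold eps; split <;> simp

lemma eps_flip_ne (s : Fin n → Bool) {k q : Fin n} (h : k ≠ q) :
    eps (flip s q) k = eps s k := by
  unfold eps; rw [flip_apply_ne s h]

lemma sgn_mul_self (s : Fin n → Bool) (j : ℕ) : sgn s j * sgn s j = 1 := by
  unfold sgn
  rw [← Finset.prod_mul_distrib]
  exact Finset.prod_eq_one fun k _ => eps_mul_self s k

lemma star_sgn (s : Fin n → Bool) (j : ℕ) : star (sgn s j) = sgn s j := by
  unfold sgn
  rw [star_prod]
  exact Finset.prod_congr rfl fun k _ => star_eps s k

lemma sgn_flip_of_le (s : Fin n → Bool) {q : Fin n} {j : ℕ} (h : j ≤ (q : ℕ)) :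
    sgn (flip s q) j = sgn s j := by
  unfold sgn
  refine Finset.prod_congr rfl fun k hk => ?_
  simp only [Finset.mem_filter] at hk
  have hkq : k ≠ q := by
    intro e; subst e; omega
  exact eps_flip_ne s hkq

lemma sgn_flip_of_lt (s : Fin n → Bool) {q : Fin n} {j : ℕ} (h : (q : ℕ) < j) :
    sgn (flip s q) j = - sgn s j := by
  unfold sgn
  have hq : q ∈ Finset.univ.filter (fun k : Fin n => (k : ℕ) < j) := by simp [h]
  rw [← Finset.mul_prod_erase _ _ hq, ← Finset.mul_prod_erase _ _ hq]
  have h1 : eps (flip s q) q = - eps s q := by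
    unfold eps
    rw [flip_apply s q q, if_pos rfl]
    cases s q <;> simp
  have h2 : ∀ k ∈ (Finset.univ.filter (fun k : Fin n => (k : ℕ) < j)).erase q,
      eps (flip s q) k = eps s k := fun k hk => eps_flip_ne s (Finset.ne_of_mem_erase hk)
  rw [h1, Finset.prod_congr rfl h2, neg_mul]


def targ (i : ℕ) (s : Fin n → Bool) : Fin n → Bool :=
  if h : i < n then flip s ⟨i, h⟩ else s

lemma targ_targ (i : ℕ) (s : Fin n → Bool) : targ i (targ i s) = s := by
  unfold targ
  split_ifs with h
  · exact flip_flip s ⟨i, h⟩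
  · rfl

lemma sgn_targ_self (i : ℕ) (s : Fin n → Bool) : sgn (targ i s) i = sgn s i := by
  unfold targ
  split_ifs with h
  · exact sgn_flip_of_le s le_rfl
  · rfl

def Cmat (n i : ℕ) : Matrix (Fin n → Bool) (Fin n → Bool) ℂ :=
  Matrix.of fun s t => if t = targ i s then sgn s i else 0

lemma Cmat_apply (i : ℕ) (s t : Fin n → Bool) :
    Cmat n i s t = if t = targ i s then sgn s i else 0 := rfl

lemma Cmat_transpose (i : ℕ) : (Cmat n i)ᵀ = Cmat n i := by
  ext s t
  rw [transpose_apply, Cmat_apply, Cmat_apply]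
  by_cases h : t = targ i s
  · subst h
    rw [if_pos (targ_targ i s).symm, if_pos rfl, sgn_targ_self]
  · rw [if_neg h, if_neg]
    intro hs
    exact h (by rw [hs, targ_targ])

lemma star_Cmat (i : ℕ) (s t : Fin n → Bool) : star (Cmat n i s t) = Cmat n i s t := by
  rw [Cmat_apply]
  split_ifs
  · exact star_sgn s i
  · exact star_zero _

lemma Cmat_isHermitian (i : ℕ) : (Cmat n i).IsHermitian := by
  ext s t
  rw [conjTranspose_apply, star_Cmat]
  exact congrFun (congrFun (Cmat_transpose i) s) t

lemma Cmat_mul_apply (i j : ℕ) (s t : Fin n → Bool) :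
    (Cmat n i * Cmat n j) s t = sgn s i * Cmat n j (targ i s) t := by
  rw [mul_apply]
  simp only [Cmat_apply (n := n) i s, ite_mul, zero_mul]
  rw [Finset.sum_ite_eq' Finset.univ (targ i s) (fun u => sgn s i * Cmat n j u t)]
  simp

lemma anti {i j : ℕ} (hij : i < j) (hj : j ≤ n) :
    Cmat n i * Cmat n j + Cmat n j * Cmat n i = 0 := by
  have hi : i < n := lt_of_lt_of_le hij hj
  ext s t
  rw [Matrix.add_apply, Cmat_mul_apply, Cmat_mul_apply, Cmat_apply, Cmat_apply, Matrix.zero_apply]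
  have hti : targ i s = flip s ⟨i, hi⟩ := dif_pos hi
  have hcomm : targ j (targ i s) = targ i (targ j s) := by
    unfold targ
    split_ifs with h
    · exact flip_comm s (by simp [Fin.ext_iff]; omega)
    · rfl
  have h1 : sgn (targ i s) j = - sgn s j := by
    rw [hti]; exact sgn_flip_of_lt s hij
  have h2 : sgn (targ j s) i = sgn s i := by
    unfold targ
    split_ifs with h
    · exact sgn_flip_of_le s (le_of_lt hij)
    · rfl
  rw [h1, h2, hcomm]
  split_ifs <;> ring

lemma clifford {i j : ℕ} (hi : i ≤ n) (hj : j ≤ n) :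
    Cmat n i * Cmat n j + Cmat n j * Cmat n i
      = if i = j then (2 : ℂ) • (1 : Matrix (Fin n → Bool) (Fin n → Bool) ℂ) else 0 := by
  rcases lt_trichotomy i j with h | h | h
  · rw [if_neg (Nat.ne_of_lt h)]; exact anti h hj
  · subst h
    rw [if_pos rfl]
    ext s t
    rw [Matrix.add_apply, Cmat_mul_apply, Cmat_apply, Matrix.smul_apply, one_apply, sgn_targ_self,
      targ_targ]
    by_cases h : t = s
    · subst h; simp [sgn_mul_self]; norm_num
    · rw [if_neg h, if_neg (fun hh => h hh.symm)]; simp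
  · rw [if_neg (Nat.ne_of_gt h), add_comm]; exact anti h hi


section Main

variable {m : Type} [Fintype m] [DecidableEq m] [Nonempty m] {d : ℕ}

lemma main (C : Fin d → Matrix m m ℂ)
    (hH : ∀ i, (C i).IsHermitian)
    (hT : ∀ i, (C i)ᵀ = C i)
    (hA : ∀ i j, C i * C j + C j * C i
      = if i = j then (2 : ℂ) • (1 : Matrix m m ℂ) else 0) :
    (∀ i, (C i).IsHermitian) ∧
      (∀ v : Fin d → ℝ, ∑ i, v i ^ 2 = 1 → (1 - ∑ i, (v i : ℂ) • C i).PosSemidef) ∧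
      ((d : ℂ) ∈ spectrum ℂ (∑ i, C i ⊗ₖ C i)) ∧
      (∀ ρ : ℝ, ((ρ : ℂ) • (1 : Matrix (m × m) (m × m) ℂ) - ∑ i, C i ⊗ₖ C i).PosSemidef →
        (d : ℝ) ≤ ρ) := by
  have hsq : ∀ i, C i * C i = 1 := by
    intro i
    have h1 := hA i i
    rw [if_pos rfl] at h1
    refine smul_right_injective _ (two_ne_zero : (2:ℂ) ≠ 0) ?_
    show (2:ℂ) • (C i * C i) = (2:ℂ) • (1 : Matrix m m ℂ)
    rw [two_smul, h1]
  -- the entrywise square identity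
  have hentry : ∀ (i : Fin d) (a b : m),
      ∑ k, C i a k * C i b k = if a = b then 1 else 0 := by
    intro i a b
    have h1 := congrFun (congrFun (hsq i) a) b
    rw [mul_apply] at h1
    calc ∑ k, C i a k * C i b k
        = ∑ k, C i a k * C i k b := by
          refine Finset.sum_congr rfl fun k _ => ?_
          congr 1
          rw [← congrFun (congrFun (hT i) k) b, transpose_apply]
      _ = (1 : Matrix m m ℂ) a b := h1
      _ = if a = b then 1 else 0 := one_apply
  -- the maximally entangled vector
  set w : m × m → ℂ := fun p => if p.1 = p.2 then 1 else 0 with hwdef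
  have hw : w ≠ 0 := by
    intro h
    obtain ⟨a⟩ := ‹Nonempty m›
    have := congrFun h (a, a)
    simp [hwdef] at this
  set S := ∑ i, C i ⊗ₖ C i with hSdef
  have hSw : S *ᵥ w = (d : ℂ) • w := by
    funext p
    obtain ⟨a, b⟩ := p
    have : (S *ᵥ w) (a, b) = ∑ i, ∑ k, C i a k * C i b k := by
      simp only [mulVec, dotProduct, hSdef, Matrix.sum_apply, kroneckerMap_apply,
        Fintype.sum_prod_type, hwdef, mul_ite, mul_one, mul_zero, Finset.sum_ite_eq,
        Finset.mem_univ, if_true, Finset.sum_mul, ite_mul, zero_mul]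
      rw [Finset.sum_comm]
    rw [this]
    simp only [hentry, Pi.smul_apply, hwdef, smul_eq_mul]
    simp [Finset.sum_const, mul_ite]
  refine ⟨hH, ?_, ?_, ?_⟩
  · -- PosSemidef part
    intro v hv
    set M := ∑ i, (v i : ℂ) • C i with hMdef
    have hMH : M.IsHermitian := by
      show Mᴴ = M
      rw [hMdef, conjTranspose_sum]
      refine Finset.sum_congr rfl fun i _ => ?_
      rw [conjTranspose_smul, (hH i).eq, Complex.star_def, Complex.conj_ofReal]
    have expand : M * M = ∑ i, ∑ j, ((v i : ℂ) * v j) • (C i * C j) := by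
      rw [hMdef, Finset.sum_mul_sum]
      refine Finset.sum_congr rfl fun i _ => Finset.sum_congr rfl fun j _ => ?_
      rw [smul_mul_smul_comm]
    have expand2 : M * M = ∑ i, ∑ j, ((v j : ℂ) * v i) • (C j * C i) :=
      expand.trans Finset.sum_comm
    have hv' : (∑ i, (v i : ℂ) * v i) = 1 := by
      have := congrArg (fun x : ℝ => (x : ℂ)) hv
      push_cast at this
      simpa [sq] using this
    have key : (2:ℂ) • (M * M) = (2:ℂ) • (1 : Matrix m m ℂ) := by
      rw [two_smul]
      nth_rewrite 1 [expand]
      nth_rewrite 1 [expand2]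
      rw [← Finset.sum_add_distrib]
      simp_rw [← Finset.sum_add_distrib]
      have hc : ∀ i j : Fin d, ((v i : ℂ) * v j) • (C i * C j) + ((v j : ℂ) * v i) • (C j * C i)
          = ((v i : ℂ) * v j) • (C i * C j + C j * C i) := by
        intro i j
        rw [mul_comm ((v j : ℂ)) ((v i : ℂ)), smul_add]
      simp_rw [hc, hA, smul_ite, smul_zero]
      simp_rw [Finset.sum_ite_eq, Finset.mem_univ, if_true]
      rw [← Finset.sum_smul, hv', one_smul]
    have hMM : M * M = 1 := smul_right_injective _ (two_ne_zero : (2:ℂ) ≠ 0) key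
    have hIH : (1 - M).IsHermitian := isHermitian_one.sub hMH
    have key2 : (1 - M)ᴴ * (1 - M) = (2:ℂ) • (1 - M) := by
      rw [hIH.eq]
      have h3 : (1 - M) * (1 - M) = 1 - M - M + M * M := by noncomm_ring
      rw [h3, hMM, two_smul]
      abel
    refine .of_dotProduct_mulVec_nonneg hIH fun x => ?_
    have h0 := (posSemidef_conjTranspose_mul_self (1 - M)).dotProduct_mulVec_nonneg x
    rw [key2, smul_mulVec, dotProduct_smul, smul_eq_mul] at h0
    have h2 : (0:ℂ) ≤ (2:ℂ)⁻¹ := by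
      rw [Complex.le_def]
      norm_num
    have h4 : star x ⬝ᵥ ((1 - M) *ᵥ x) = (2:ℂ)⁻¹ * (2 * (star x ⬝ᵥ ((1 - M) *ᵥ x))) := by
      ring
    rw [h4]
    exact mul_nonneg h2 h0
  · -- spectrum part
    rw [spectrum.mem_iff]
    intro hu
    rw [Matrix.isUnit_iff_isUnit_det] at hu
    have hdet : ((algebraMap ℂ (Matrix (m × m) (m × m) ℂ) (d:ℂ)) - S).det = 0 := by
      rw [← Matrix.exists_mulVec_eq_zero_iff]
      refine ⟨w, hw, ?_⟩
      rw [sub_mulVec, Algebra.algebraMap_eq_smul_one, smul_mulVec, one_mulVec, hSw,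
        sub_self]
    rw [hdet] at hu
    simp at hu
  · -- rho part
    intro ρ hρ
    have h0 := hρ.dotProduct_mulVec_nonneg w
    have hstar : star w = w := by
      funext p
      simp only [hwdef, Pi.star_apply]
      split_ifs <;> simp
    have hcard : (w ⬝ᵥ w) = (Fintype.card m : ℂ) := by
      simp [dotProduct, hwdef, Fintype.sum_prod_type, mul_ite, mul_one, mul_zero,
        Finset.sum_ite_eq, Finset.card_univ]
    rw [hstar, sub_mulVec, smul_mulVec, one_mulVec, hSw, dotProduct_sub,
      dotProduct_smul, dotProduct_smul, hcard, smul_eq_mul, smul_eq_mul] at h0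
    rw [show (ρ:ℂ) * (Fintype.card m : ℂ) - (d:ℂ) * (Fintype.card m : ℂ)
        = (((ρ - d) * Fintype.card m : ℝ) : ℂ) by push_cast; ring] at h0
    rw [Complex.zero_le_real] at h0
    have hcpos : (0:ℝ) < Fintype.card m := by exact_mod_cast Fintype.card_pos
    nlinarith [h0, hcpos]

end Main

end Stmt3

/-- For every `d ≥ 1` there are self-adjoint `2^(d-1) × 2^(d-1)` matrices `B₁,…,B_d` with
`∑ vᵢ Bᵢ ≤ I` for all unit vectors `v ∈ ℝ^d`, such that `d` is an eigenvalue of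
`∑ Bᵢ ⊗ Bᵢ`; consequently `∑ Bᵢ ⊗ Bᵢ ≤ ρ I` forces `ρ ≥ d`. -/
theorem stmt_3 (d : ℕ) (hd : 1 ≤ d) :
    ∃ B : Fin d → Matrix (Fin (2 ^ (d - 1))) (Fin (2 ^ (d - 1))) ℂ,
      (∀ i, (B i).IsHermitian) ∧
      (∀ v : Fin d → ℝ, ∑ i, v i ^ 2 = 1 →
        (1 - ∑ i, (v i : ℂ) • B i).PosSemidef) ∧
      ((d : ℂ) ∈ spectrum ℂ (∑ i, (B i) ⊗ₖ (B i))) ∧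
      (∀ ρ : ℝ, ((ρ : ℂ) • (1 : Matrix _ _ ℂ) - ∑ i, (B i) ⊗ₖ (B i)).PosSemidef →
        (d : ℝ) ≤ ρ) := by
  classical
  set n := d - 1 with hn
  haveI : Nonempty (Fin (2 ^ (d - 1))) := ⟨⟨0, by positivity⟩⟩
  have hcard : Fintype.card (Fin n → Bool) = 2 ^ (d - 1) := by
    simp [Fintype.card_fun, hn]
  let e : (Fin n → Bool) ≃ Fin (2 ^ (d - 1)) := Fintype.equivFinOfCardEq hcard
  have hle : ∀ i : Fin d, (i : ℕ) ≤ n := by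
    intro i
    have := i.isLt
    omega
  refine ⟨fun i => (Stmt3.Cmat n i).submatrix e.symm e.symm, ?_⟩
  apply Stmt3.main
  · intro i
    exact (Stmt3.Cmat_isHermitian (i : ℕ)).submatrix e.symm
  · intro i
    rw [transpose_submatrix, Stmt3.Cmat_transpose]
  · intro i j
    rw [submatrix_mul_equiv, submatrix_mul_equiv]
    have hadd : (Stmt3.Cmat n (i:ℕ) * Stmt3.Cmat n (j:ℕ)).submatrix (⇑e.symm) (⇑e.symm)
        + (Stmt3.Cmat n (j:ℕ) * Stmt3.Cmat n (i:ℕ)).submatrix (⇑e.symm) (⇑e.symm)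
        = (Stmt3.Cmat n (i:ℕ) * Stmt3.Cmat n (j:ℕ)
            + Stmt3.Cmat n (j:ℕ) * Stmt3.Cmat n (i:ℕ)).submatrix (⇑e.symm) (⇑e.symm) := rfl
    rw [hadd, Stmt3.clifford (hle i) (hle j)]
    rcases eq_or_ne (i : ℕ) (j : ℕ) with h | h
    · rw [if_pos h, if_pos (Fin.ext h)]
      have hsm : (((2:ℂ) • 1 : Matrix (Fin n → Bool) (Fin n → Bool) ℂ)).submatrix
          (⇑e.symm) (⇑e.symm)
          = (2:ℂ) • ((1 : Matrix (Fin n → Bool) (Fin n → Bool) ℂ).submatrix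
            (⇑e.symm) (⇑e.symm)) := rfl
      rw [hsm, Matrix.submatrix_one_equiv]
    · rw [if_neg h, if_neg (fun hh => h (congrArg Fin.val hh))]
      rfl
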